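/- Let T = Σ_{j,k,ℓ ∈ {x,y,z}} ε_{jkℓ} s_j ⊗ s_k ⊗ s_ℓ on (ℂ²)^⊗3, and let τ_y = I/2 + s_y and τ_z = I/2 + s_z. Then for every 2×2 complex matrix ρ, all of the following first-order changes vanish exactly: Tr[(s_x ⊗ I ⊗ I)·[T, ρ ⊗ τ_y ⊗ τ_z]] = 0; Tr[(I ⊗ s_x ⊗ I)·[T, ρ ⊗ τ_y ⊗ τ_z]] = 0; Tr[(I ⊗ s_y ⊗ I)·[T, ρ ⊗ τ_y ⊗ τ_z]] = 0; Tr[(I ⊗ I ⊗ s_x)·[T, ρ ⊗ τ_y ⊗ τ_z]] = 0; and Tr[(I ⊗ I ⊗ s_z)·[T, ρ ⊗ τ_y ⊗ τ_z]] = 0. That is, to first order the system's x-spin is unchanged, the first reference spin only picks up z-spin, and the second reference spin only picks up y-spin. -/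

import Mathlib

open Matrix Kronecker
open scoped ComplexOrder

noncomputable section

/-- Pauli matrices -/
def σx : Matrix (Fin 2) (Fin 2) ℂ := !![0, 1; 1, 0]
def σy : Matrix (Fin 2) (Fin 2) ℂ := !![0, -Complex.I; Complex.I, 0]
def σz : Matrix (Fin 2) (Fin 2) ℂ := !![1, 0; 0, -1]

/-- spin operators `s_x, s_y, s_z` (with ℏ = 1), indexed by `0 = x`, `1 = y`, `2 = z`. -/
def spin : Fin 3 → Matrix (Fin 2) (Fin 2) ℂ := fun j => (2 : ℂ)⁻¹ • (![σx, σy, σz] j)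

/-- Levi-Civita symbol on indices `0,1,2` (i.e. `x,y,z`). -/
def εLC (j k l : Fin 3) : ℂ :=
  ((((k : ℤ) - (j : ℤ)) * (((l : ℤ) - (j : ℤ)) * ((l : ℤ) - (k : ℤ))) : ℤ) : ℂ) / 2

/-- The rotationally invariant 3-qubit interaction `T = Σ ε_{jkl} s_j ⊗ s_k ⊗ s_l`. -/
def T : Matrix ((Fin 2 × Fin 2) × Fin 2) ((Fin 2 × Fin 2) × Fin 2) ℂ :=
  ∑ j : Fin 3, ∑ k : Fin 3, ∑ l : Fin 3, εLC j k l • (spin j ⊗ₖ spin k ⊗ₖ spin l)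

/-- Total spin component `S_k^tot` on three qubits. -/
def Stot (k : Fin 3) : Matrix ((Fin 2 × Fin 2) × Fin 2) ((Fin 2 × Fin 2) × Fin 2) ℂ :=
  spin k ⊗ₖ (1 : Matrix (Fin 2) (Fin 2) ℂ) ⊗ₖ (1 : Matrix (Fin 2) (Fin 2) ℂ)
    + (1 : Matrix (Fin 2) (Fin 2) ℂ) ⊗ₖ spin k ⊗ₖ (1 : Matrix (Fin 2) (Fin 2) ℂ)
    + (1 : Matrix (Fin 2) (Fin 2) ℂ) ⊗ₖ (1 : Matrix (Fin 2) (Fin 2) ℂ) ⊗ₖ spin k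

/-- `τ_j = I/2 + s_j`, the density matrix of a spin-1/2 particle polarized in the `+j` direction. -/
def τ (j : Fin 3) : Matrix (Fin 2) (Fin 2) ℂ := (2 : ℂ)⁻¹ • 1 + spin j

/-- Partial trace over the second and third tensor factors. -/
def ptraceR (M : Matrix ((Fin 2 × Fin 2) × Fin 2) ((Fin 2 × Fin 2) × Fin 2) ℂ) :
    Matrix (Fin 2) (Fin 2) ℂ :=
  Matrix.of fun i j => ∑ b : Fin 2, ∑ c : Fin 2, M ((i, b), c) ((j, b), c)

/-- Trace norm `‖A‖₁ = Tr √(A†A)`. -/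
def traceNorm {n : Type*} [Fintype n] [DecidableEq n] (A : Matrix n n ℂ) : ℝ :=
  (((Matrix.posSemidef_conjTranspose_mul_self A).1.eigenvectorUnitary.1 *
      diagonal (fun i => ((√((Matrix.posSemidef_conjTranspose_mul_self A).1.eigenvalues i) : ℝ) : ℂ)) *
      (star (Matrix.posSemidef_conjTranspose_mul_self A).1.eigenvectorUnitary :
        Matrix n n ℂ)).trace).re


lemma T_eq : T = (spin 0 ⊗ₖ spin 1 ⊗ₖ spin 2) + (spin 1 ⊗ₖ spin 2 ⊗ₖ spin 0)
    + (spin 2 ⊗ₖ spin 0 ⊗ₖ spin 1) - (spin 0 ⊗ₖ spin 2 ⊗ₖ spin 1)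
    - (spin 2 ⊗ₖ spin 1 ⊗ₖ spin 0) - (spin 1 ⊗ₖ spin 0 ⊗ₖ spin 2) := by
  show (∑ j : Fin 3, ∑ k : Fin 3, ∑ l : Fin 3, εLC j k l • (spin j ⊗ₖ spin k ⊗ₖ spin l)) = _
  simp only [Fin.sum_univ_three, εLC]
  norm_num
  module

lemma tr3mul (X Y Z A B C R S U : Matrix (Fin 2) (Fin 2) ℂ) :
    ((X ⊗ₖ Y ⊗ₖ Z) * ((A ⊗ₖ B ⊗ₖ C) * (R ⊗ₖ S ⊗ₖ U))).trace
      = ((X*A)*R).trace * (((Y*B)*S).trace * (((Z*C)*U).trace)) := by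
  simp only [← Matrix.mul_kronecker_mul, Matrix.trace_kronecker, mul_assoc]

set_option maxHeartbeats 2000000 in
/-- To first order, the system's `x`-spin is unchanged, the first reference spin only
picks up `z`-spin, and the second reference spin only picks up `y`-spin. -/
theorem first_order_changes_vanish (ρ : Matrix (Fin 2) (Fin 2) ℂ) :
    ((spin 0 ⊗ₖ (1 : Matrix (Fin 2) (Fin 2) ℂ) ⊗ₖ (1 : Matrix (Fin 2) (Fin 2) ℂ)) *
        (T * (ρ ⊗ₖ τ 1 ⊗ₖ τ 2) - (ρ ⊗ₖ τ 1 ⊗ₖ τ 2) * T)).trace = 0 ∧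
    (((1 : Matrix (Fin 2) (Fin 2) ℂ) ⊗ₖ spin 0 ⊗ₖ (1 : Matrix (Fin 2) (Fin 2) ℂ)) *
        (T * (ρ ⊗ₖ τ 1 ⊗ₖ τ 2) - (ρ ⊗ₖ τ 1 ⊗ₖ τ 2) * T)).trace = 0 ∧
    (((1 : Matrix (Fin 2) (Fin 2) ℂ) ⊗ₖ spin 1 ⊗ₖ (1 : Matrix (Fin 2) (Fin 2) ℂ)) *
        (T * (ρ ⊗ₖ τ 1 ⊗ₖ τ 2) - (ρ ⊗ₖ τ 1 ⊗ₖ τ 2) * T)).trace = 0 ∧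
    (((1 : Matrix (Fin 2) (Fin 2) ℂ) ⊗ₖ (1 : Matrix (Fin 2) (Fin 2) ℂ) ⊗ₖ spin 0) *
        (T * (ρ ⊗ₖ τ 1 ⊗ₖ τ 2) - (ρ ⊗ₖ τ 1 ⊗ₖ τ 2) * T)).trace = 0 ∧
    (((1 : Matrix (Fin 2) (Fin 2) ℂ) ⊗ₖ (1 : Matrix (Fin 2) (Fin 2) ℂ) ⊗ₖ spin 2) *
        (T * (ρ ⊗ₖ τ 1 ⊗ₖ τ 2) - (ρ ⊗ₖ τ 1 ⊗ₖ τ 2) * T)).trace = 0 := by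
  refine ⟨?_, ?_, ?_, ?_, ?_⟩ <;>
  · rw [T_eq]
    simp only [mul_sub, sub_mul, add_mul, mul_add, Matrix.trace_sub, Matrix.trace_add, tr3mul]
    simp only [spin, τ, σx, σy, σz, Fin.isValue, Matrix.cons_val_zero, Matrix.cons_val_one,
      Matrix.head_cons, Matrix.trace_fin_two, Matrix.mul_apply, Fin.sum_univ_two,
      Matrix.smul_apply, Matrix.add_apply, Matrix.one_apply, Matrix.cons_val', Matrix.empty_val',
      Matrix.cons_val_fin_one, smul_eq_mul, Matrix.cons_val_two, Matrix.tail_cons]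
    norm_num
    ring
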